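/- Let P, P̄ ∈ ℝ^{p×p} be permutation matrices and, for i = 1, …, m, let Tⁱ, T̄ⁱ ∈ ℝ^{p×p} be strictly lower triangular matrices such that Pᵀ Tⁱ P = P̄ᵀ T̄ⁱ P̄ for all i. Assume that every entry strictly below the diagonal of the union matrix T̄^U := Σ_{i=1}^m abs(T̄ⁱ) is nonzero, where abs denotes the entrywise absolute value. Then P = P̄ and Tⁱ = T̄ⁱ for all i = 1, …, m. -/

import Mathlib

open Matrix

theorem stmt14 {p n : ℕ} (P Pbar : Matrix (Fin p) (Fin p) ℝ)
    (hP : ∃ σ : Equiv.Perm (Fin p), P = σ.permMatrix ℝ)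
    (hPbar : ∃ σ : Equiv.Perm (Fin p), Pbar = σ.permMatrix ℝ)
    (T Tbar : Fin n → Matrix (Fin p) (Fin p) ℝ)
    (hT : ∀ i, ∀ k l : Fin p, k ≤ l → T i k l = 0)
    (hTbar : ∀ i, ∀ k l : Fin p, k ≤ l → Tbar i k l = 0)
    (hdense : ∀ k l : Fin p, l < k →
      (∑ i, Matrix.of fun k' l' => |Tbar i k' l'|) k l ≠ 0)
    (h : ∀ i, Pᵀ * T i * P = Pbarᵀ * Tbar i * Pbar) :
    P = Pbar ∧ ∀ i, T i = Tbar i := by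
  obtain ⟨σ, rfl⟩ := hP
  obtain ⟨τ, rfl⟩ := hPbar
  have hconj : ∀ (ρ : Equiv.Perm (Fin p)) (M : Matrix (Fin p) (Fin p) ℝ) (a b : Fin p),
      ((ρ.permMatrix ℝ)ᵀ * M * (ρ.permMatrix ℝ)) a b = M (ρ.symm a) (ρ.symm b) := by
    intro ρ M a b
    have h1 : ((ρ.toPEquiv.toMatrix : Matrix (Fin p) (Fin p) ℝ))ᵀ
        = (ρ.symm.toPEquiv.toMatrix : Matrix (Fin p) (Fin p) ℝ) := by
      rw [Equiv.toPEquiv_symm, PEquiv.toMatrix_symm]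
    show (((ρ.toPEquiv.toMatrix : Matrix (Fin p) (Fin p) ℝ))ᵀ * M * (ρ.toPEquiv.toMatrix : Matrix (Fin p) (Fin p) ℝ)) a b = _
    rw [h1, PEquiv.toMatrix_toPEquiv_mul, PEquiv.mul_toMatrix_toPEquiv]
    simp
  set π : Equiv.Perm (Fin p) := σ.trans τ.symm with hpi
  have key : ∀ i k l, T i k l = Tbar i (π k) (π l) := by
    intro i k l
    have := congrFun (congrFun (h i) (σ k)) (σ l)
    rw [hconj σ, hconj τ] at this
    simpa [hpi] using this
  have mono : Monotone (π : Fin p → Fin p) := by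
    intro k l hkl
    by_contra hlt
    push_neg at hlt
    apply hdense (π k) (π l) hlt
    have hz : ∀ i, Tbar i (π k) (π l) = 0 := by
      intro i
      rw [← key i k l]
      exact hT i k l hkl
    simp [Matrix.sum_apply, hz]
  have hsm : StrictMono (π : Fin p → Fin p) := mono.strictMono_of_injective π.injective
  have hid : (π : Fin p → Fin p) = id := by
    have hr : Set.range (π : Fin p → Fin p) = Set.range (id : Fin p → Fin p) := by
      rw [Set.range_id, Set.range_eq_univ]
      exact π.surjective
    exact (hsm.range_inj strictMono_id).mp hr
  have hst : σ = τ := Equiv.ext fun k => by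
    have hk : π k = k := congrFun hid k
    rw [hpi] at hk
    simpa [Equiv.symm_apply_eq] using hk
  constructor
  · rw [hst]
  · intro i
    ext k l
    rw [key i k l, congrFun hid k, congrFun hid l]
    rfl
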